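/- Let r₀ > 0 be such that ∫₀^β (r² + 2 sin² y)^{1/2}(3/4 − sin² y) dy ≥ 0 for all β ≥ 0 and 0 ≤ r ≤ r₀. Then for every 0 < r ≤ r₀ and every z ∈ ℝ, |G₁(r,z)| ≤ (9/4)·(1/2)·(G₂(r,z))²/r², where G₀(r,w) = ∫₀^w (1 + 2 sin²(ry)/r²)^{1/2} · (2 sin²(ry)/r²) dy, G₁(r,z) = (3/2) ∫₀^z G₀(r,w) (1 + 2 sin²(rw)/r²)^{1/2} dw, and G₂(r,w) = ∫₀^w (1 + 2 sin²(ry)/r²)^{1/2} dy. -/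

import Mathlib

open Real intervalIntegral

noncomputable def G₀ (r w : ℝ) : ℝ :=
  ∫ y in (0:ℝ)..w, Real.sqrt (1 + 2 * Real.sin (r * y) ^ 2 / r ^ 2) *
    (2 * Real.sin (r * y) ^ 2 / r ^ 2)

noncomputable def G₁ (r z : ℝ) : ℝ :=
  (3/2) * ∫ w in (0:ℝ)..z, G₀ r w * Real.sqrt (1 + 2 * Real.sin (r * w) ^ 2 / r ^ 2)

noncomputable def G₂ (r w : ℝ) : ℝ :=
  ∫ y in (0:ℝ)..w, Real.sqrt (1 + 2 * Real.sin (r * y) ^ 2 / r ^ 2)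

section aux

lemma cont_f (r : ℝ) : Continuous (fun y : ℝ => Real.sqrt (1 + 2 * Real.sin (r * y) ^ 2 / r ^ 2)) := by
  fun_prop

lemma cont_g (r : ℝ) : Continuous (fun y : ℝ => Real.sqrt (1 + 2 * Real.sin (r * y) ^ 2 / r ^ 2) *
    (2 * Real.sin (r * y) ^ 2 / r ^ 2)) := by
  fun_prop

lemma f_even (r y : ℝ) : Real.sqrt (1 + 2 * Real.sin (r * (-y)) ^ 2 / r ^ 2)
    = Real.sqrt (1 + 2 * Real.sin (r * y) ^ 2 / r ^ 2) := by
  rw [mul_neg, Real.sin_neg]; ring_nf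

lemma g_even (r y : ℝ) : Real.sqrt (1 + 2 * Real.sin (r * (-y)) ^ 2 / r ^ 2) *
      (2 * Real.sin (r * (-y)) ^ 2 / r ^ 2)
    = Real.sqrt (1 + 2 * Real.sin (r * y) ^ 2 / r ^ 2) * (2 * Real.sin (r * y) ^ 2 / r ^ 2) := by
  rw [mul_neg, Real.sin_neg]; ring_nf

lemma G₂_neg (r z : ℝ) : G₂ r (-z) = - G₂ r z := by
  unfold G₂
  have h1 := intervalIntegral.integral_comp_neg (a := (0:ℝ)) (b := z)
    (fun y : ℝ => Real.sqrt (1 + 2 * Real.sin (r * y) ^ 2 / r ^ 2))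
  simp only [neg_zero] at h1
  have h2 : (∫ y in (0:ℝ)..z, Real.sqrt (1 + 2 * Real.sin (r * (-y)) ^ 2 / r ^ 2))
      = ∫ y in (0:ℝ)..z, Real.sqrt (1 + 2 * Real.sin (r * y) ^ 2 / r ^ 2) :=
    intervalIntegral.integral_congr fun y _ => f_even r y
  have h3 := intervalIntegral.integral_symm (μ := MeasureTheory.volume) (a := (0:ℝ)) (b := -z)
    (f := fun y : ℝ => Real.sqrt (1 + 2 * Real.sin (r * y) ^ 2 / r ^ 2))
  linarith [h1, h2, h3]

lemma G₀_neg (r z : ℝ) : G₀ r (-z) = - G₀ r z := by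
  unfold G₀
  have h1 := intervalIntegral.integral_comp_neg (a := (0:ℝ)) (b := z)
    (fun y : ℝ => Real.sqrt (1 + 2 * Real.sin (r * y) ^ 2 / r ^ 2) *
      (2 * Real.sin (r * y) ^ 2 / r ^ 2))
  simp only [neg_zero] at h1
  have h2 : (∫ y in (0:ℝ)..z, Real.sqrt (1 + 2 * Real.sin (r * (-y)) ^ 2 / r ^ 2) *
        (2 * Real.sin (r * (-y)) ^ 2 / r ^ 2))
      = ∫ y in (0:ℝ)..z, Real.sqrt (1 + 2 * Real.sin (r * y) ^ 2 / r ^ 2) *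
        (2 * Real.sin (r * y) ^ 2 / r ^ 2) :=
    intervalIntegral.integral_congr fun y _ => g_even r y
  have h3 := intervalIntegral.integral_symm (μ := MeasureTheory.volume) (a := (0:ℝ)) (b := -z)
    (f := fun y : ℝ => Real.sqrt (1 + 2 * Real.sin (r * y) ^ 2 / r ^ 2) *
      (2 * Real.sin (r * y) ^ 2 / r ^ 2))
  linarith [h1, h2, h3]

lemma G₁_even (r z : ℝ) : G₁ r (-z) = G₁ r z := by
  unfold G₁
  have h1 := intervalIntegral.integral_comp_neg (a := (0:ℝ)) (b := z)
    (fun w : ℝ => G₀ r w * Real.sqrt (1 + 2 * Real.sin (r * w) ^ 2 / r ^ 2))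
  simp only [neg_zero] at h1
  have h2 : (∫ w in (0:ℝ)..z, G₀ r (-w) * Real.sqrt (1 + 2 * Real.sin (r * (-w)) ^ 2 / r ^ 2))
      = ∫ w in (0:ℝ)..z, -(G₀ r w * Real.sqrt (1 + 2 * Real.sin (r * w) ^ 2 / r ^ 2)) := by
    apply intervalIntegral.integral_congr
    intro w _
    simp only [G₀_neg, f_even]
    ring
  rw [intervalIntegral.integral_neg] at h2
  have h3 := intervalIntegral.integral_symm (μ := MeasureTheory.volume) (a := (0:ℝ)) (b := -z)
    (f := fun w : ℝ => G₀ r w * Real.sqrt (1 + 2 * Real.sin (r * w) ^ 2 / r ^ 2))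
  have : (∫ w in (0:ℝ)..(-z), G₀ r w * Real.sqrt (1 + 2 * Real.sin (r * w) ^ 2 / r ^ 2))
      = ∫ w in (0:ℝ)..z, G₀ r w * Real.sqrt (1 + 2 * Real.sin (r * w) ^ 2 / r ^ 2) := by
    linarith [h1, h2, h3]
  rw [this]

lemma G₂_hasDerivAt (r z : ℝ) :
    HasDerivAt (G₂ r) (Real.sqrt (1 + 2 * Real.sin (r * z) ^ 2 / r ^ 2)) z :=
  intervalIntegral.integral_hasDerivAt_right
    ((cont_f r).intervalIntegrable 0 z)
    ((cont_f r).stronglyMeasurableAtFilter _ _)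
    (cont_f r).continuousAt

lemma G₂_cont (r : ℝ) : Continuous (G₂ r) :=
  continuous_iff_continuousAt.2 fun z => (G₂_hasDerivAt r z).continuousAt

lemma G₀_cont (r : ℝ) : Continuous (G₀ r) := by
  refine continuous_iff_continuousAt.2 fun z => ?_
  exact (intervalIntegral.integral_hasDerivAt_right
    ((cont_g r).intervalIntegrable 0 z)
    ((cont_g r).stronglyMeasurableAtFilter _ _)
    (cont_g r).continuousAt).continuousAt

lemma G₂_sq_int (r z : ℝ) :
    ∫ w in (0:ℝ)..z, G₂ r w * Real.sqrt (1 + 2 * Real.sin (r * w) ^ 2 / r ^ 2)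
      = (G₂ r z) ^ 2 / 2 := by
  have hderiv : ∀ x ∈ Set.uIcc (0:ℝ) z,
      HasDerivAt (fun w => (G₂ r w) ^ 2 / 2)
        (G₂ r x * Real.sqrt (1 + 2 * Real.sin (r * x) ^ 2 / r ^ 2)) x := by
    intro x _
    have : HasDerivAt (fun w => (G₂ r w) ^ 2 / 2) _ x := ((G₂_hasDerivAt r x).pow 2).div_const 2
    convert this using 1
    ring
  have hint : IntervalIntegrable
      (fun w => G₂ r w * Real.sqrt (1 + 2 * Real.sin (r * w) ^ 2 / r ^ 2)) MeasureTheory.volume 0 z :=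
    ((G₂_cont r).mul (cont_f r)).intervalIntegrable 0 z
  rw [intervalIntegral.integral_eq_sub_of_hasDerivAt hderiv hint]
  simp [G₂]

end aux

theorem skyrme_stmt4 (r₀ : ℝ) (hr₀ : 0 < r₀)
    (h : ∀ r : ℝ, 0 ≤ r → r ≤ r₀ → ∀ β : ℝ, 0 ≤ β →
      0 ≤ ∫ y in (0:ℝ)..β, Real.sqrt (r ^ 2 + 2 * Real.sin y ^ 2) * (3/4 - Real.sin y ^ 2)) :
    ∀ r : ℝ, 0 < r → r ≤ r₀ → ∀ z : ℝ,
      |G₁ r z| ≤ (9/4) * (1/2) * (G₂ r z) ^ 2 / r ^ 2 := by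
  intro r hr hrr z
  have hr2 : (0:ℝ) < r ^ 2 := by positivity
  set f : ℝ → ℝ := fun y => Real.sqrt (1 + 2 * Real.sin (r * y) ^ 2 / r ^ 2) with hf
  -- pointwise key inequality
  have key : ∀ w : ℝ, 0 ≤ w → (3/2) * G₀ r w ≤ (9/4) / r ^ 2 * G₂ r w := by
    intro w hw
    have h1 := h r hr.le hrr (r * w) (by positivity)
    have h2 : (∫ y in (0:ℝ)..w,
        Real.sqrt (r ^ 2 + 2 * Real.sin (r * y) ^ 2) * (3/4 - Real.sin (r * y) ^ 2))
        = r⁻¹ * ∫ y in (0:ℝ)..(r*w),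
          Real.sqrt (r ^ 2 + 2 * Real.sin y ^ 2) * (3/4 - Real.sin y ^ 2) := by
      have := intervalIntegral.integral_comp_mul_left
        (fun y : ℝ => Real.sqrt (r ^ 2 + 2 * Real.sin y ^ 2) * (3/4 - Real.sin y ^ 2))
        (c := r) (a := 0) (b := w) hr.ne'
      simpa using this
    have h3 : 0 ≤ ∫ y in (0:ℝ)..w,
        Real.sqrt (r ^ 2 + 2 * Real.sin (r * y) ^ 2) * (3/4 - Real.sin (r * y) ^ 2) := by
      rw [h2]; positivity
    have h4 : ∀ y : ℝ, Real.sqrt (r ^ 2 + 2 * Real.sin (r * y) ^ 2) * (3/4 - Real.sin (r * y) ^ 2)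
        = r * ((3/4) * f y - (r^2/2) * (f y * (2 * Real.sin (r * y) ^ 2 / r ^ 2))) := by
      intro y
      have hs : Real.sqrt (r ^ 2 + 2 * Real.sin (r * y) ^ 2) = r * f y := by
        rw [hf]
        rw [show r ^ 2 + 2 * Real.sin (r * y) ^ 2 = r^2 * (1 + 2 * Real.sin (r * y) ^ 2 / r ^ 2) by
          field_simp]
        rw [Real.sqrt_mul (by positivity), Real.sqrt_sq hr.le]
      rw [hs]; field_simp
    rw [intervalIntegral.integral_congr (fun y _ => h4 y)] at h3
    have h5 : (∫ y in (0:ℝ)..w, r * ((3/4) * f y - (r^2/2) * (f y * (2 * Real.sin (r * y) ^ 2 / r ^ 2))))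
        = r * ((3/4) * G₂ r w - (r^2/2) * G₀ r w) := by
      rw [intervalIntegral.integral_const_mul]
      congr 1
      rw [intervalIntegral.integral_sub, intervalIntegral.integral_const_mul,
        intervalIntegral.integral_const_mul]
      · rfl
      · exact (continuous_const.mul (cont_f r)).intervalIntegrable 0 w
      · exact (continuous_const.mul (cont_g r)).intervalIntegrable 0 w
    rw [h5] at h3
    have h6 : 0 ≤ (3/4) * G₂ r w - (r^2/2) * G₀ r w := nonneg_of_mul_nonneg_right h3 hr
    rw [div_mul_eq_mul_div ((9:ℝ)/4) (r^2) (G₂ r w), le_div_iff₀ hr2]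
    nlinarith [h6]
  have hG₀nonneg : ∀ w : ℝ, 0 ≤ w → 0 ≤ G₀ r w := by
    intro w hw
    apply intervalIntegral.integral_nonneg hw
    intro y _
    positivity
  have main : ∀ z : ℝ, 0 ≤ z → |G₁ r z| ≤ (9/4) * (1/2) * (G₂ r z) ^ 2 / r ^ 2 := by
    intro z hz
    have hint0 : IntervalIntegrable (fun w => G₀ r w * f w) MeasureTheory.volume 0 z :=
      ((G₀_cont r).mul (cont_f r)).intervalIntegrable 0 z
    have hint2 : IntervalIntegrable (fun w => (3/2) * (G₀ r w * f w)) MeasureTheory.volume 0 z :=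
      (continuous_const.mul ((G₀_cont r).mul (cont_f r))).intervalIntegrable 0 z
    have hint1 : IntervalIntegrable (fun w => (9/4) / r ^ 2 * (G₂ r w * f w)) MeasureTheory.volume 0 z :=
      (continuous_const.mul ((G₂_cont r).mul (cont_f r))).intervalIntegrable 0 z
    have hG1nonneg : 0 ≤ G₁ r z := by
      unfold G₁
      have : 0 ≤ ∫ w in (0:ℝ)..z, G₀ r w * f w := by
        apply intervalIntegral.integral_nonneg hz
        intro w hw
        exact mul_nonneg (hG₀nonneg w hw.1) (Real.sqrt_nonneg _)
      linarith
    rw [abs_of_nonneg hG1nonneg]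
    have hmono : G₁ r z ≤ (9/4) / r ^ 2 * ((G₂ r z)^2 / 2) := by
      have hG1eq : G₁ r z = ∫ w in (0:ℝ)..z, (3/2) * (G₀ r w * f w) := by
        unfold G₁; rw [intervalIntegral.integral_const_mul]
      rw [hG1eq]
      calc (∫ w in (0:ℝ)..z, (3/2) * (G₀ r w * f w))
          ≤ ∫ w in (0:ℝ)..z, (9/4) / r ^ 2 * (G₂ r w * f w) := by
            apply intervalIntegral.integral_mono_on hz hint2 hint1
            intro w hw
            have hk := key w hw.1
            have hfw : 0 ≤ f w := Real.sqrt_nonneg _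
            nlinarith [mul_le_mul_of_nonneg_right hk hfw]
        _ = (9/4) / r ^ 2 * ((G₂ r z)^2 / 2) := by
            rw [intervalIntegral.integral_const_mul, G₂_sq_int r z]
    calc G₁ r z ≤ (9/4) / r ^ 2 * ((G₂ r z)^2 / 2) := hmono
      _ = (9/4) * (1/2) * (G₂ r z) ^ 2 / r ^ 2 := by ring
  rcases le_or_gt 0 z with hz | hz
  · exact main z hz
  · have hG2 : (G₂ r z)^2 = (G₂ r (-z))^2 := by
      rw [G₂_neg]; ring
    rw [← G₁_even r z, hG2]
    exact main (-z) (by linarith)
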